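/- Concrete minimax lower bound: fix h > 0 and n ≥ 4, set ε = 1/(6√(2n)), p₀ = 1/16, p₁ = p₀ + ε. Let m̃ have density proportional to t ↦ sech((t−1)/h) on [0,1], let σ̃² have density proportional to t ↦ sech(t/h) on [0,1/4], independent, W = m̃² + σ̃², and Φ(p) = E[|p − m̃|] + E[|p² − W|]. Then for every function T : ({0,1} × {0,1})ⁿ → ℝ, one has max_{b ∈ {0,1}} E_{(Y_i^{(1)},Y_i^{(2)})_{i≤n} i.i.d., each coordinate i.i.d. Bernoulli(p_b)} [ |T((Y_i^{(1)},Y_i^{(2)})_{i≤n}) − Φ(p_b)| ] ≥ 1/(48·√(2n)). -/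

import Mathlib

open MeasureTheory ProbabilityTheory
open scoped ENNReal

/-- The Bernoulli measure on `Bool` with parameter `p`: mass `p` at `true` and
mass `1 − p` at `false`. -/
noncomputable def bernoulliMeasure (p : ℝ) : Measure Bool :=
  ENNReal.ofReal p • Measure.dirac true + ENNReal.ofReal (1 - p) • Measure.dirac false

instance (p : ℝ) : IsFiniteMeasure (bernoulliMeasure p) := by
  constructor
  simp only [_root_.bernoulliMeasure, Measure.add_apply, Measure.smul_apply, smul_eq_mul,
    Measure.dirac_apply', Set.mem_univ, MeasurableSet.univ, Set.indicator_univ,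
    Pi.one_apply, mul_one]
  exact ENNReal.add_lt_top.2 ⟨ENNReal.ofReal_lt_top, ENNReal.ofReal_lt_top⟩

/-- The law of `n` i.i.d. 2-snapshots, each snapshot consisting of two independent
`Bernoulli(p)` labels. -/
noncomputable def snapshotLaw (p : ℝ) (n : ℕ) : Measure (Fin n → Bool × Bool) :=
  Measure.pi fun _ : Fin n => (_root_.bernoulliMeasure p).prod (_root_.bernoulliMeasure p)

lemma bern_apply (p : ℝ) (b : Bool) :
    bernoulliMeasure p {b} = ENNReal.ofReal (if b then p else 1 - p) := by
  cases b <;> simp [_root_.bernoulliMeasure, Measure.dirac_apply']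

lemma snapshot_single (p : ℝ) (n : ℕ) (x : Fin n → Bool × Bool) :
    snapshotLaw p n {x} = ∏ i, (bernoulliMeasure p {(x i).1} * bernoulliMeasure p {(x i).2}) := by
  have hx : {x} = Set.pi Set.univ (fun i => ({x i} : Set (Bool × Bool))) := by
    ext y; simp [funext_iff, Set.mem_pi]
  rw [snapshotLaw, hx, Measure.pi_pi]
  refine Finset.prod_congr rfl fun i _ => ?_
  have : ({x i} : Set (Bool × Bool)) = {(x i).1} ×ˢ {(x i).2} := by
    ext z; simp [Prod.ext_iff]
  rw [this, Measure.prod_prod]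

-- probability measure when 0 ≤ p ≤ 1
lemma bern_univ (p : ℝ) (hp0 : 0 ≤ p) (hp1 : p ≤ 1) : bernoulliMeasure p Set.univ = 1 := by
  simp only [_root_.bernoulliMeasure, Measure.add_apply, Measure.smul_apply, smul_eq_mul,
    Measure.dirac_apply', Set.mem_univ, MeasurableSet.univ, Set.indicator_univ,
    Pi.one_apply, mul_one]
  rw [← ENNReal.ofReal_add hp0 (by linarith)]
  norm_num

lemma snapshot_toReal (p : ℝ) (hp0 : 0 ≤ p) (hp1 : p ≤ 1) (n : ℕ) (x : Fin n → Bool × Bool) :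
    ((snapshotLaw p n) {x}).toReal
      = ∏ i, ((if (x i).1 then p else 1-p) * (if (x i).2 then p else 1-p)) := by
  rw [snapshot_single, ENNReal.toReal_prod]
  refine Finset.prod_congr rfl fun i _ => ?_
  rw [bern_apply, bern_apply, ENNReal.toReal_mul, ENNReal.toReal_ofReal, ENNReal.toReal_ofReal]
  · split <;> linarith
  · split <;> linarith

lemma sqrt_prod' {ι : Type*} (s : Finset ι) (f : ι → ℝ) (hf : ∀ i ∈ s, 0 ≤ f i) :
    Real.sqrt (∏ i ∈ s, f i) = ∏ i ∈ s, Real.sqrt (f i) := by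
  induction s using Finset.cons_induction with
  | empty => simp
  | cons a s ha ih =>
    rw [Finset.prod_cons, Finset.prod_cons, Real.sqrt_mul (hf a (Finset.mem_cons_self a s)),
      ih (fun i hi => hf i (Finset.mem_cons_of_mem hi))]

set_option maxHeartbeats 1000000 in
lemma lecam (n : ℕ) (hn : 1 ≤ n) (p0 p1 : ℝ) (h00 : 0 ≤ p0) (h01 : p0 ≤ 1)
    (h10 : 0 ≤ p1) (h11 : p1 ≤ 1)
    (haff : 1 - 1/(16*n) ≤ Real.sqrt (p0*p1) + Real.sqrt ((1-p0)*(1-p1)))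
    (T : (Fin n → Bool × Bool) → ℝ) (a0 a1 : ℝ) :
    |a0 - a1| / 4 ≤ max (∫ y, |T y - a0| ∂(snapshotLaw p0 n))
      (∫ y, |T y - a1| ∂(snapshotLaw p1 n)) := by
  haveI hP0 : IsProbabilityMeasure (bernoulliMeasure p0) := ⟨bern_univ _ h00 h01⟩
  haveI hP1 : IsProbabilityMeasure (bernoulliMeasure p1) := ⟨bern_univ _ h10 h11⟩
  haveI : IsProbabilityMeasure (snapshotLaw p0 n) := by
    unfold snapshotLaw; infer_instance
  haveI : IsProbabilityMeasure (snapshotLaw p1 n) := by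
    unfold snapshotLaw; infer_instance
  have hb0 : ∀ c : Bool, 0 ≤ (if c then p0 else 1-p0) := by
    intro c; cases c <;> simp <;> linarith
  have hb1 : ∀ c : Bool, 0 ≤ (if c then p1 else 1-p1) := by
    intro c; cases c <;> simp <;> linarith
  set q0 : (Fin n → Bool × Bool) → ℝ := fun x => ((snapshotLaw p0 n) {x}).toReal with hq0
  set q1 : (Fin n → Bool × Bool) → ℝ := fun x => ((snapshotLaw p1 n) {x}).toReal with hq1
  have q0nn : ∀ x, 0 ≤ q0 x := fun x => ENNReal.toReal_nonneg
  have q1nn : ∀ x, 0 ≤ q1 x := fun x => ENNReal.toReal_nonneg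
  -- total mass 1
  have key : ∀ (ν : Measure (Fin n → Bool × Bool)) [IsProbabilityMeasure ν],
      (∑ x : Fin n → Bool × Bool, (ν {x}).toReal = 1) := by
    intro ν _
    have h1 : ∫ (_ : Fin n → Bool × Bool), (1:ℝ) ∂ν = 1 := by rw [integral_const]; simp
    rw [integral_fintype Integrable.of_finite] at h1
    simp only [smul_eq_mul, mul_one] at h1; exact h1
  have hsum0 : ∑ x, q0 x = 1 := key _
  have hsum1 : ∑ x, q1 x = 1 := key _
  set r1 : ℝ := Real.sqrt (p0*p1) + Real.sqrt ((1-p0)*(1-p1)) with hr1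
  set g : Bool → ℝ := fun a => Real.sqrt ((if a then p0 else 1-p0) * (if a then p1 else 1-p1))
    with hgdef
  have hg : ∀ a, 0 ≤ g a := fun a => Real.sqrt_nonneg _
  have hgsum : (g true + g false) = r1 := by simp [hgdef, hr1]
  have haffin : ∑ x : Fin n → Bool × Bool, Real.sqrt (q0 x * q1 x) = (r1^2)^n := by
    have hx : ∀ x : Fin n → Bool × Bool, Real.sqrt (q0 x * q1 x) = ∏ i, (g (x i).1 * g (x i).2) := by
      intro x
      show Real.sqrt (((snapshotLaw p0 n) {x}).toReal * ((snapshotLaw p1 n) {x}).toReal)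
        = ∏ i, (g (x i).1 * g (x i).2)
      rw [ snapshot_toReal p0 h00 h01, snapshot_toReal p1 h10 h11,
        ← Finset.prod_mul_distrib, sqrt_prod']
      · refine Finset.prod_congr rfl fun i _ => ?_
        rw [hgdef]
        have e : ((if (x i).1 then p0 else 1-p0) * (if (x i).2 then p0 else 1-p0)) *
            ((if (x i).1 then p1 else 1-p1) * (if (x i).2 then p1 else 1-p1))
            = ((if (x i).1 then p0 else 1-p0) * (if (x i).1 then p1 else 1-p1)) *
              ((if (x i).2 then p0 else 1-p0) * (if (x i).2 then p1 else 1-p1)) := by ring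
        rw [e, Real.sqrt_mul (mul_nonneg (hb0 _) (hb1 _))]
      · intro i _
        exact mul_nonneg (mul_nonneg (hb0 _) (hb0 _)) (mul_nonneg (hb1 _) (hb1 _))
    calc ∑ x : Fin n → Bool × Bool, Real.sqrt (q0 x * q1 x) = ∑ x : Fin n → Bool × Bool, ∏ i, (g (x i).1 * g (x i).2) := by
          exact Finset.sum_congr rfl fun x _ => hx x
      _ = (∑ c : Bool × Bool, g c.1 * g c.2) ^ n := (Fintype.sum_pow (fun c : Bool × Bool => g c.1 * g c.2) n).symm
      _ = ((g true + g false) * (g true + g false)) ^ n := by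
          rw [Fintype.sum_prod_type]
          congr 1
          simp [Finset.mul_sum, Finset.sum_mul]
          ring
      _ = (r1^2)^n := by rw [hgsum]; ring_nf
  have hnpos : (0:ℝ) < n := by exact_mod_cast Nat.lt_of_lt_of_le Nat.zero_lt_one hn
  have hr1nn : 0 ≤ r1 := add_nonneg (Real.sqrt_nonneg _) (Real.sqrt_nonneg _)
  -- ((r1^2)^n)^2 = r1^(4n) ≥ 3/4
  have hA2 : (3:ℝ)/4 ≤ ((r1^2)^n)^2 := by
    have e : ((r1^2)^n)^2 = r1^(4*n) := by
      rw [← pow_mul, ← pow_mul]; congr 1; ring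
    have hb := one_add_mul_le_pow (a := r1 - 1) (show (-2:ℝ) ≤ r1 - 1 by linarith) (4*n)
    have e2 : (1:ℝ) + (r1 - 1) = r1 := by ring
    rw [e2] at hb
    push_cast at hb
    have h4 : (3:ℝ)/4 ≤ 1 + (4*n) * (r1 - 1) := by
      have : r1 - 1 ≥ -(1/(16*n)) := by linarith
      have h2 : (4*(n:ℝ)) * (r1 - 1) ≥ (4*n) * (-(1/(16*n))) := by
        apply mul_le_mul_of_nonneg_left this (by positivity)
      have h3 : (4*(n:ℝ)) * (-(1/(16*n))) = -(1/4) := by field_simp; ring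
      linarith
    rw [e]; exact h4.trans hb
  set S : ℝ := ∑ x : Fin n → Bool × Bool, min (q0 x) (q1 x) with hS
  have hSnn : 0 ≤ S := Finset.sum_nonneg fun x _ => le_min (q0nn x) (q1nn x)
  have hS1 : S ≤ 1 := by
    rw [hS, ← hsum0]
    exact Finset.sum_le_sum fun x _ => min_le_left _ _
  have hmax : ∑ x : Fin n → Bool × Bool, max (q0 x) (q1 x) = 2 - S := by
    have : ∀ x : Fin n → Bool × Bool, max (q0 x) (q1 x) = q0 x + q1 x - min (q0 x) (q1 x) := by
      intro x
      have := min_add_max (q0 x) (q1 x); linarith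
    rw [Finset.sum_congr rfl fun x _ => this x, Finset.sum_sub_distrib,
      Finset.sum_add_distrib, hsum0, hsum1, ← hS]
    ring
  have hcs : ((∑ x : Fin n → Bool × Bool, Real.sqrt (q0 x * q1 x)))^2 ≤ S * (2 - S) := by
    rw [← hmax, hS]
    apply Finset.sum_sq_le_sum_mul_sum_of_sq_eq_mul
    · exact fun x _ => le_min (q0nn x) (q1nn x)
    · exact fun x _ => le_max_of_le_left (q0nn x)
    · intro x _
      rw [Real.sq_sqrt (mul_nonneg (q0nn x) (q1nn x)), min_mul_max]
  rw [haffin] at hcs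
  have hShalf : 1/2 ≤ S := by nlinarith
  -- expectations
  have hE0 : ∫ y, |T y - a0| ∂(snapshotLaw p0 n)
      = ∑ x : Fin n → Bool × Bool, q0 x * |T x - a0| := by
    rw [integral_fintype Integrable.of_finite]; exact Finset.sum_congr rfl fun x _ => rfl
  have hE1 : ∫ y, |T y - a1| ∂(snapshotLaw p1 n)
      = ∑ x : Fin n → Bool × Bool, q1 x * |T x - a1| := by
    rw [integral_fintype Integrable.of_finite]; exact Finset.sum_congr rfl fun x _ => rfl
  have hkey : |a0 - a1| * S ≤ (∑ x : Fin n → Bool × Bool, q0 x * |T x - a0|)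
      + ∑ x : Fin n → Bool × Bool, q1 x * |T x - a1| := by
    rw [hS, Finset.mul_sum, ← Finset.sum_add_distrib]
    refine Finset.sum_le_sum fun x _ => ?_
    have htri : |a0 - a1| ≤ |T x - a0| + |T x - a1| := by
      have : a0 - a1 = -(T x - a0) + (T x - a1) := by ring
      rw [this]
      exact (abs_add_le _ _).trans (by rw [abs_neg])
    have h1 : |a0 - a1| * min (q0 x) (q1 x)
        ≤ (|T x - a0| + |T x - a1|) * min (q0 x) (q1 x) :=
      mul_le_mul_of_nonneg_right htri (le_min (q0nn x) (q1nn x))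
    have h2 : (|T x - a0| + |T x - a1|) * min (q0 x) (q1 x)
        ≤ q0 x * |T x - a0| + q1 x * |T x - a1| := by
      have m0 : min (q0 x) (q1 x) ≤ q0 x := min_le_left _ _
      have m1 : min (q0 x) (q1 x) ≤ q1 x := min_le_right _ _
      have a0nn : 0 ≤ |T x - a0| := abs_nonneg _
      have a1nn : 0 ≤ |T x - a1| := abs_nonneg _
      nlinarith [le_min (q0nn x) (q1nn x)]
    calc |a0 - a1| * min (q0 x) (q1 x) ≤ _ := h1
      _ ≤ _ := h2
  have hfin : |a0 - a1| * (1/2) ≤ (∫ y, |T y - a0| ∂(snapshotLaw p0 n))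
      + ∫ y, |T y - a1| ∂(snapshotLaw p1 n) := by
    rw [hE0, hE1]
    refine le_trans ?_ hkey
    exact mul_le_mul_of_nonneg_left hShalf (abs_nonneg _)
  have hm0 := le_max_left (∫ y, |T y - a0| ∂(snapshotLaw p0 n))
      (∫ y, |T y - a1| ∂(snapshotLaw p1 n))
  have hm1 := le_max_right (∫ y, |T y - a0| ∂(snapshotLaw p0 n))
      (∫ y, |T y - a1| ∂(snapshotLaw p1 n))
  linarith

lemma cdf_bound {Ω : Type*} [MeasurableSpace Ω] (μ : Measure Ω) [IsProbabilityMeasure μ]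
    (h : ℝ) (hh : 0 < h) (p1 : ℝ) (hp0 : 0 < p1) (hp1 : p1 < 1)
    (mt : Ω → ℝ) (hmt : Measurable mt)
    (hlaw1 : Measure.map mt μ =
      (ENNReal.ofReal (∫ t in Set.Icc (0:ℝ) 1, (Real.cosh ((t - 1) / h))⁻¹))⁻¹ •
        ((volume.restrict (Set.Icc (0:ℝ) 1)).withDensity
          fun t => ENNReal.ofReal ((Real.cosh ((t - 1) / h))⁻¹))) :
    (μ {ω | mt ω < p1}).toReal ≤ p1 / (1 - p1) := by
  set f : ℝ → ℝ := fun t => (Real.cosh ((t - 1) / h))⁻¹ with hfdef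
  have hfcont : Continuous f := by
    apply Continuous.inv₀
    · exact Real.continuous_cosh.comp (by continuity)
    · exact fun x => ne_of_gt (Real.cosh_pos _)
  have hfpos : ∀ t, 0 < f t := fun t => inv_pos.2 (Real.cosh_pos _)
  have hkey : ∀ a b : ℝ, a ≤ b → b ≤ 1 → f a ≤ f b := by
    intro a b hab hb1
    apply inv_anti₀ (Real.cosh_pos _)
    apply Real.cosh_le_cosh.2
    rw [abs_div, abs_div, abs_of_pos hh, abs_of_nonpos (by linarith : b - 1 ≤ 0),
      abs_of_nonpos (by linarith : a - 1 ≤ 0)]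
    exact (div_le_div_iff_of_pos_right hh).2 (by linarith)
  set I : ℝ := ∫ t in Set.Icc (0:ℝ) 1, f t with hI
  set ν : Measure ℝ := (volume.restrict (Set.Icc (0:ℝ) 1)).withDensity
    (fun t => ENNReal.ofReal (f t)) with hν
  have hIlow : (1 - p1) * f p1 ≤ I := by
    have h1 : ∫ t in Set.Icc p1 1, f t ≤ I := by
      apply setIntegral_mono_set (hfcont.integrableOn_Icc)
      · exact Filter.Eventually.of_forall fun t => (hfpos t).le
      · exact HasSubset.Subset.eventuallyLE (Set.Icc_subset_Icc (by linarith) le_rfl)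
    have h2 : ∫ t in Set.Icc p1 1, (f p1) ≤ ∫ t in Set.Icc p1 1, f t := by
      apply setIntegral_mono_on
      · exact integrableOn_const (by rw [Real.volume_Icc]; exact ENNReal.ofReal_ne_top)
      · exact hfcont.integrableOn_Icc
      · exact measurableSet_Icc
      · exact fun x hx => hkey p1 x hx.1 hx.2
    have h3 : ∫ t in Set.Icc p1 1, (f p1) = (1 - p1) * f p1 := by
      rw [setIntegral_const, Measure.real, Real.volume_Icc, ENNReal.toReal_ofReal (by linarith), smul_eq_mul]
    linarith
  have hνbound : ν (Set.Iio p1) ≤ ENNReal.ofReal (p1 * f p1) := by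
    rw [hν, withDensity_apply _ measurableSet_Iio,
      Measure.restrict_restrict measurableSet_Iio]
    calc ∫⁻ t in Set.Iio p1 ∩ Set.Icc 0 1, ENNReal.ofReal (f t) ∂volume
        ≤ ∫⁻ _t in Set.Iio p1 ∩ Set.Icc 0 1, ENNReal.ofReal (f p1) ∂volume := by
          apply setLIntegral_mono measurable_const
          intro t ht
          exact ENNReal.ofReal_le_ofReal (hkey t p1 ht.1.le hp1.le)
      _ = ENNReal.ofReal (f p1) * volume (Set.Iio p1 ∩ Set.Icc 0 1) := by
          rw [setLIntegral_const]
      _ ≤ ENNReal.ofReal (f p1) * ENNReal.ofReal p1 := by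
          apply mul_le_mul_right
          have hsub : Set.Iio p1 ∩ Set.Icc 0 1 ⊆ Set.Icc 0 p1 := by
            intro t ht; exact ⟨ht.2.1, ht.1.le⟩
          calc volume (Set.Iio p1 ∩ Set.Icc 0 1) ≤ volume (Set.Icc 0 p1) := measure_mono hsub
            _ = ENNReal.ofReal p1 := by rw [Real.volume_Icc, sub_zero]
      _ = ENNReal.ofReal (p1 * f p1) := by
          rw [← ENNReal.ofReal_mul (hfpos p1).le, mul_comm]
  have hμA : μ {ω | mt ω < p1} = (ENNReal.ofReal I)⁻¹ * ν (Set.Iio p1) := by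
    have : {ω | mt ω < p1} = mt ⁻¹' (Set.Iio p1) := rfl
    rw [this, ← Measure.map_apply hmt measurableSet_Iio, hlaw1, Measure.smul_apply,
      smul_eq_mul]
  have hle : μ {ω | mt ω < p1} ≤ ENNReal.ofReal (p1 / (1 - p1)) := by
    rw [hμA]
    have hc : ENNReal.ofReal ((1 - p1) * f p1) ≤ ENNReal.ofReal I :=
      ENNReal.ofReal_le_ofReal hIlow
    have hinv : (ENNReal.ofReal I)⁻¹ ≤ (ENNReal.ofReal ((1 - p1) * f p1))⁻¹ :=
      ENNReal.inv_le_inv' hc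
    calc (ENNReal.ofReal I)⁻¹ * ν (Set.Iio p1)
        ≤ (ENNReal.ofReal ((1 - p1) * f p1))⁻¹ * ENNReal.ofReal (p1 * f p1) :=
          mul_le_mul' hinv hνbound
      _ = ENNReal.ofReal (p1 * f p1) / ENNReal.ofReal ((1 - p1) * f p1) := by
          rw [div_eq_mul_inv, mul_comm]
      _ = ENNReal.ofReal ((p1 * f p1) / ((1 - p1) * f p1)) := by
          rw [ENNReal.ofReal_div_of_pos (mul_pos (by linarith) (hfpos p1))]
      _ = ENNReal.ofReal (p1 / (1 - p1)) := by
          congr 1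
          rw [mul_div_mul_right _ _ (ne_of_gt (hfpos p1))]
  exact ENNReal.toReal_le_of_le_ofReal (div_nonneg hp0.le (by linarith)) hle

lemma ae_mem_of_law {Ω : Type*} [MeasurableSpace Ω] (μ : Measure Ω) (g : Ω → ℝ)
    (hg : Measurable g) (A : Set ℝ) (hA : MeasurableSet A) (c : ℝ≥0∞) (d : ℝ → ℝ≥0∞)
    (hlaw : Measure.map g μ = c • ((volume.restrict A).withDensity d)) :
    ∀ᵐ ω ∂μ, g ω ∈ A := by
  have h0 : μ (g ⁻¹' Aᶜ) = 0 := by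
    rw [← Measure.map_apply hg hA.compl, hlaw, Measure.smul_apply, smul_eq_mul,
      withDensity_apply _ hA.compl, Measure.restrict_restrict hA.compl,
      Set.compl_inter_self, Measure.restrict_empty, lintegral_zero_measure, mul_zero]
  rw [ae_iff]
  exact h0

lemma gap_bound {Ω : Type*} [MeasurableSpace Ω] (μ : Measure Ω) [IsProbabilityMeasure μ]
    (mt sg : Ω → ℝ) (hmt : Measurable mt) (hsg : Measurable sg)
    (hm01 : ∀ᵐ ω ∂μ, mt ω ∈ Set.Icc (0:ℝ) 1)
    (hs01 : ∀ᵐ ω ∂μ, sg ω ∈ Set.Icc (0:ℝ) (1/4))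
    (p0 p1 : ℝ) (h0 : 0 < p0) (h01 : p0 < p1) (h11 : p1 < 1) :
    (p1 - p0) * (1 - 2 * (μ {ω | mt ω < p1}).toReal - (p0 + p1)) ≤
      ((∫ ω, |p0 - mt ω| ∂μ) + ∫ ω, |p0^2 - (mt ω^2 + sg ω)| ∂μ)
      - ((∫ ω, |p1 - mt ω| ∂μ) + ∫ ω, |p1^2 - (mt ω^2 + sg ω)| ∂μ) := by
  set ε := p1 - p0 with hε
  -- integrability
  have hint1 : ∀ p : ℝ, Integrable (fun ω => |p - mt ω|) μ := by
    intro p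
    apply Integrable.mono' (integrable_const (|p| + 1))
    · exact ((measurable_const.sub hmt).abs).aestronglyMeasurable
    · filter_upwards [hm01] with ω hω
      rw [Real.norm_eq_abs, abs_abs]
      calc |p - mt ω| ≤ |p| + |mt ω| := abs_sub _ _
        _ ≤ |p| + 1 := by
            have : |mt ω| ≤ 1 := abs_le.2 ⟨by linarith [hω.1], hω.2⟩
            linarith
  have hint2 : ∀ p : ℝ, Integrable (fun ω => |p^2 - (mt ω^2 + sg ω)|) μ := by
    intro p
    apply Integrable.mono' (integrable_const (|p^2| + 2))
    · exact ((measurable_const.sub ((hmt.pow_const 2).add hsg)).abs).aestronglyMeasurable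
    · filter_upwards [hm01, hs01] with ω h1 h2
      rw [Real.norm_eq_abs, abs_abs]
      calc |p^2 - (mt ω^2 + sg ω)| ≤ |p^2| + |mt ω^2 + sg ω| := abs_sub _ _
        _ ≤ |p^2| + 2 := by
            have hb : |mt ω^2 + sg ω| ≤ 2 := by
              rw [abs_le]
              constructor <;> nlinarith [h1.1, h1.2, h2.1, h2.2]
            linarith
  have hA : MeasurableSet {ω | mt ω < p1} := hmt measurableSet_Iio
  set A := {ω | mt ω < p1} with hAdef
  set P := (μ A).toReal with hP
  -- term 1
  have hterm1 : ε - 2*ε*P ≤ (∫ ω, |p0 - mt ω| ∂μ) - ∫ ω, |p1 - mt ω| ∂μ := by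
    have hInd : Integrable (A.indicator fun _ => (1:ℝ)) μ := (integrable_const 1).indicator hA
    have hgint : Integrable (fun ω => ε - 2*ε*(A.indicator (fun _ => (1:ℝ)) ω)) μ :=
      (integrable_const ε).sub (hInd.const_mul (2*ε))
    have hgval : ∫ ω, (ε - 2*ε*(A.indicator (fun _ => (1:ℝ)) ω)) ∂μ = ε - 2*ε*P := by
      rw [integral_sub (integrable_const ε) (hInd.const_mul (2*ε)), integral_const,
        integral_const_mul, integral_indicator_const _ hA]
      simp [hP, Measure.real]
    have hmono : ∀ ω, (ε - 2*ε*(A.indicator (fun _ => (1:ℝ)) ω))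
        ≤ |p0 - mt ω| - |p1 - mt ω| := by
      intro ω
      by_cases hω : ω ∈ A
      · rw [Set.indicator_of_mem hω]
        have := abs_sub_abs_le_abs_sub (p1 - mt ω) (p0 - mt ω)
        have e : |p1 - mt ω - (p0 - mt ω)| = ε := by
          rw [show p1 - mt ω - (p0 - mt ω) = ε by ring, abs_of_pos (by linarith)]
        rw [e] at this
        linarith
      · rw [Set.indicator_of_notMem hω]
        have hge : p1 ≤ mt ω := not_lt.1 hω
        rw [abs_of_nonpos (by linarith : p0 - mt ω ≤ 0),
          abs_of_nonpos (by linarith : p1 - mt ω ≤ 0)]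
        ring_nf
        linarith
    calc ε - 2*ε*P = ∫ ω, (ε - 2*ε*(A.indicator (fun _ => (1:ℝ)) ω)) ∂μ := hgval.symm
      _ ≤ ∫ ω, (|p0 - mt ω| - |p1 - mt ω|) ∂μ :=
          integral_mono hgint ((hint1 p0).sub (hint1 p1)) hmono
      _ = (∫ ω, |p0 - mt ω| ∂μ) - ∫ ω, |p1 - mt ω| ∂μ :=
          integral_sub (hint1 p0) (hint1 p1)
  -- term 2
  have hterm2 : (∫ ω, |p1^2 - (mt ω^2 + sg ω)| ∂μ) - ∫ ω, |p0^2 - (mt ω^2 + sg ω)| ∂μ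
      ≤ p1^2 - p0^2 := by
    have hmono : ∀ ω, |p1^2 - (mt ω^2 + sg ω)| - |p0^2 - (mt ω^2 + sg ω)| ≤ p1^2 - p0^2 := by
      intro ω
      have := abs_sub_abs_le_abs_sub (p1^2 - (mt ω^2 + sg ω)) (p0^2 - (mt ω^2 + sg ω))
      have e : |p1^2 - (mt ω^2 + sg ω) - (p0^2 - (mt ω^2 + sg ω))| = p1^2 - p0^2 := by
        rw [show p1^2 - (mt ω^2 + sg ω) - (p0^2 - (mt ω^2 + sg ω)) = p1^2 - p0^2 by ring,
          abs_of_nonneg (by nlinarith)]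
      rw [e] at this
      linarith
    calc (∫ ω, |p1^2 - (mt ω^2 + sg ω)| ∂μ) - ∫ ω, |p0^2 - (mt ω^2 + sg ω)| ∂μ
        = ∫ ω, (|p1^2 - (mt ω^2 + sg ω)| - |p0^2 - (mt ω^2 + sg ω)|) ∂μ :=
          (integral_sub (hint2 p1) (hint2 p0)).symm
      _ ≤ ∫ _ω, (p1^2 - p0^2) ∂μ :=
          integral_mono ((hint2 p1).sub (hint2 p0)) (integrable_const _) hmono
      _ = p1^2 - p0^2 := by rw [integral_const]; simp
  have : ε * (1 - 2*P - (p0 + p1)) = (ε - 2*ε*P) - (p1^2 - p0^2) + (p1^2 - p0^2 - ε*(p0+p1)) := by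
    ring
  nlinarith [hterm1, hterm2]

lemma haff_core (nR ε b c0 d : ℝ) (hn : 4 ≤ nR) (hε2 : ε^2 = 1/(72*nR)) (hεpos : 0 < ε)
    (hεs : ε ≤ 0.06) (hbnn : 0 ≤ b) (hb2 : b^2 = 1/16 + ε) (hc0nn : 0 ≤ c0)
    (hc02 : c0^2 = 15/16) (hdnn : 0 ≤ d) (hd2 : d^2 = 1 - (1/16 + ε)) :
    1 - 1/(16*nR) ≤ (1/4)*b + c0*d := by
  have hnpos : (0:ℝ) < nR := by linarith
  have hbge : 1/4 ≤ b := by nlinarith [hb2, hbnn, hεpos]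
  have hdge : 0.9 ≤ d := by
    have h81 : (0.81:ℝ) ≤ d^2 := by rw [hd2]; linarith
    nlinarith [hdnn, h81]
  have hc0ge : 0.9 ≤ c0 := by nlinarith [hc0nn, hc02]
  have hbdiff : b - 1/4 ≤ 2*ε := by nlinarith [hbge, hb2]
  have hcdnn : 0 ≤ c0 - d := by nlinarith [hc02, hd2, hc0nn, hdnn, hεpos]
  have hcddiff : c0 - d ≤ ε := by nlinarith [hc02, hd2, hcdnn, hdge, hc0ge]
  have hid : 1 - ((1/4)*b + c0*d) = ((b - 1/4)^2 + (c0 - d)^2)/2 := by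
    linear_combination (-1/2)*hb2 - (1/2)*hd2 - (1/2)*hc02
  have e1 : (b - 1/4)^2 ≤ 4*ε^2 := by
    have := pow_le_pow_left₀ (by linarith : (0:ℝ) ≤ b - 1/4) hbdiff 2
    calc (b - 1/4)^2 ≤ (2*ε)^2 := this
      _ = 4*ε^2 := by ring
  have e2 : (c0 - d)^2 ≤ ε^2 := pow_le_pow_left₀ hcdnn hcddiff 2
  have hfin : ((b - 1/4)^2 + (c0 - d)^2)/2 ≤ 1/(16*nR) := by
    have h52 : ((b - 1/4)^2 + (c0 - d)^2)/2 ≤ (5/2)*ε^2 := by linarith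
    refine h52.trans ?_
    rw [hε2]
    rw [mul_one_div, div_le_div_iff₀ (by positivity) (by positivity)]
    nlinarith
  linarith

lemma haff_numeric (n : ℕ) (hn : 4 ≤ n) :
    1 - 1/(16*(n:ℝ)) ≤ Real.sqrt ((1/16) * (1/16 + 1/(6*Real.sqrt (2*n))))
      + Real.sqrt ((1 - 1/16) * (1 - (1/16 + 1/(6*Real.sqrt (2*n))))) := by
  have hn' : (4:ℝ) ≤ n := by exact_mod_cast hn
  have hsnn : 0 ≤ Real.sqrt (2*(n:ℝ)) := Real.sqrt_nonneg _
  have hs2 : (Real.sqrt (2*(n:ℝ)))^2 = 2*n := Real.sq_sqrt (by linarith)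
  have hs28 : (2.8:ℝ) ≤ Real.sqrt (2*(n:ℝ)) := by nlinarith
  have hεpos : 0 < 1/(6*Real.sqrt (2*(n:ℝ))) := by
    apply div_pos one_pos
    nlinarith
  have hε2 : (1/(6*Real.sqrt (2*(n:ℝ))))^2 = 1/(72*(n:ℝ)) := by
    rw [div_pow, one_pow, mul_pow, hs2]; ring_nf
  have hεs : 1/(6*Real.sqrt (2*(n:ℝ))) ≤ 0.06 := by
    rw [div_le_iff₀ (by nlinarith)]
    nlinarith
  have hp1nn : (0:ℝ) ≤ 1/16 + 1/(6*Real.sqrt (2*(n:ℝ))) := by linarith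
  have hq1nn : (0:ℝ) ≤ 1 - (1/16 + 1/(6*Real.sqrt (2*(n:ℝ)))) := by linarith
  have h116 : Real.sqrt (1/16 : ℝ) = 1/4 := by
    rw [show (1/16:ℝ) = (1/4)^2 by norm_num, Real.sqrt_sq (by norm_num : (0:ℝ) ≤ 1/4)]
  have h1 : Real.sqrt ((1/16) * (1/16 + 1/(6*Real.sqrt (2*(n:ℝ)))))
      = (1/4)*Real.sqrt (1/16 + 1/(6*Real.sqrt (2*(n:ℝ)))) := by
    rw [Real.sqrt_mul (by norm_num : (0:ℝ) ≤ 1/16), h116]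
  have h2 : Real.sqrt ((1 - 1/16) * (1 - (1/16 + 1/(6*Real.sqrt (2*(n:ℝ))))))
      = Real.sqrt (15/16 : ℝ) * Real.sqrt (1 - (1/16 + 1/(6*Real.sqrt (2*(n:ℝ))))) := by
    rw [show (1 - 1/16 : ℝ) = 15/16 by norm_num, Real.sqrt_mul (by norm_num)]
  rw [h1, h2]
  exact haff_core n (1/(6*Real.sqrt (2*(n:ℝ)))) _ _ _ hn' hε2 hεpos hεs
    (Real.sqrt_nonneg _) (Real.sq_sqrt hp1nn) (Real.sqrt_nonneg _)
    (Real.sq_sqrt (by norm_num)) (Real.sqrt_nonneg _) (Real.sq_sqrt hq1nn)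

/-- Concrete minimax lower bound: with `ε = 1/(6√(2n))`, `p₀ = 1/16`, `p₁ = p₀ + ε`,
`m̃` distributed with density proportional to `t ↦ sech((t−1)/h)` on `[0,1]`, `σ̃²`
independent with density proportional to `t ↦ sech(t/h)` on `[0,1/4]`,
`W = m̃² + σ̃²` and `Φ(p) = E|p − m̃| + E|p² − W|`, every estimator
`T : ({0,1}×{0,1})ⁿ → ℝ` of `Φ(p_b)` from `n` i.i.d. 2-snapshots of
`Bernoulli(p_b)` labels incurs worst-case expected error at least `1/(48√(2n))`. -/
theorem minimax_lower_bound
    {Ω : Type*} [MeasurableSpace Ω] (μ : Measure Ω) [IsProbabilityMeasure μ]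
    (h : ℝ) (hh : 0 < h) (n : ℕ) (hn : 4 ≤ n)
    (mt sg : Ω → ℝ) (hmt : Measurable mt) (hsg : Measurable sg)
    (hindep : IndepFun mt sg μ)
    (hlaw1 : Measure.map mt μ =
      (ENNReal.ofReal (∫ t in Set.Icc (0:ℝ) 1, (Real.cosh ((t - 1) / h))⁻¹))⁻¹ •
        ((volume.restrict (Set.Icc (0:ℝ) 1)).withDensity
          fun t => ENNReal.ofReal ((Real.cosh ((t - 1) / h))⁻¹)))
    (hlaw2 : Measure.map sg μ =
      (ENNReal.ofReal (∫ t in Set.Icc (0:ℝ) (1/4), (Real.cosh (t / h))⁻¹))⁻¹ •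
        ((volume.restrict (Set.Icc (0:ℝ) (1/4))).withDensity
          fun t => ENNReal.ofReal ((Real.cosh (t / h))⁻¹)))
    (Φ : ℝ → ℝ)
    (hΦ : ∀ p : ℝ, Φ p = (∫ ω, |p - mt ω| ∂μ) + ∫ ω, |p ^ 2 - (mt ω ^ 2 + sg ω)| ∂μ)
    (T : (Fin n → Bool × Bool) → ℝ) :
    1 / (48 * Real.sqrt (2 * n)) ≤
      max (∫ y, |T y - Φ (1/16)| ∂(snapshotLaw (1/16) n))
          (∫ y, |T y - Φ (1/16 + 1 / (6 * Real.sqrt (2 * n)))|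
            ∂(snapshotLaw (1/16 + 1 / (6 * Real.sqrt (2 * n))) n)) := by

  classical
  set s := Real.sqrt (2*(n:ℝ)) with hsdef
  have hn' : (4:ℝ) ≤ n := by exact_mod_cast hn
  have hsnn : 0 ≤ s := Real.sqrt_nonneg _
  have hs2 : s^2 = 2*n := Real.sq_sqrt (by linarith)
  have hs28 : (2.8:ℝ) ≤ s := by nlinarith
  have hspos : (0:ℝ) < s := by linarith
  set ε : ℝ := 1/(6*s) with hεdef
  have hεpos : 0 < ε := by rw [hεdef]; positivity
  have hεs : ε ≤ 0.06 := by
    rw [hεdef, div_le_iff₀ (by positivity)]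
    nlinarith
  set p1 : ℝ := 1/16 + ε with hp1def
  have hp1pos : 0 < p1 := by rw [hp1def]; linarith
  have hp1lt : p1 < 1 := by rw [hp1def]; linarith
  -- a.e. range facts
  have hm01 : ∀ᵐ ω ∂μ, mt ω ∈ Set.Icc (0:ℝ) 1 :=
    ae_mem_of_law μ mt hmt _ measurableSet_Icc _ _ hlaw1
  have hs01 : ∀ᵐ ω ∂μ, sg ω ∈ Set.Icc (0:ℝ) (1/4) :=
    ae_mem_of_law μ sg hsg _ measurableSet_Icc _ _ hlaw2
  -- cdf bound
  have hPle : (μ {ω | mt ω < p1}).toReal ≤ p1 / (1 - p1) :=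
    cdf_bound μ h hh p1 hp1pos hp1lt mt hmt hlaw1
  have hPnn : 0 ≤ (μ {ω | mt ω < p1}).toReal := ENNReal.toReal_nonneg
  -- gap
  have hgap := gap_bound μ mt sg hmt hsg hm01 hs01 (1/16) p1 (by norm_num)
    (by rw [hp1def]; linarith) hp1lt
  have hgap2 : ε/2 ≤ Φ (1/16) - Φ p1 := by
    rw [hΦ (1/16), hΦ p1]
    refine le_trans ?_ hgap
    have hPd : p1 / (1 - p1) ≤ 0.14 := by
      rw [div_le_iff₀ (by linarith)]
      rw [hp1def]; linarith
    have h14 : (μ {ω | mt ω < p1}).toReal ≤ 0.14 := hPle.trans hPd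
    have hfac : (1:ℝ)/2 ≤ 1 - 2 * (μ {ω | mt ω < p1}).toReal - (1/16 + p1) := by
      rw [hp1def]; linarith
    have hεfac : p1 - 1/16 = ε := by rw [hp1def]; ring
    rw [hεfac]
    nlinarith
  have habs : ε/2 ≤ |Φ (1/16) - Φ p1| := le_trans hgap2 (le_abs_self _)
  -- Le Cam
  have haff : 1 - 1/(16*(n:ℝ)) ≤ Real.sqrt ((1/16) * p1)
      + Real.sqrt ((1 - 1/16) * (1 - p1)) := by
    rw [hp1def, hεdef, hsdef]
    exact haff_numeric n hn
  have hlc := lecam n (by omega) (1/16) p1 (by norm_num) (by norm_num)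
    hp1pos.le hp1lt.le haff T (Φ (1/16)) (Φ p1)
  have hfinal : 1 / (48 * s) ≤ |Φ (1/16) - Φ p1| / 4 := by
    have : 1 / (48 * s) = (ε/2)/4 := by
      rw [hεdef]; field_simp; ring
    rw [this]
    linarith
  exact hfinal.trans hlc
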